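/- Let ν > 0. For (x,y) ∈ ℝ² and t > 0 define E = exp(−5νπ²t), D = 2 + E sin(2πx) sin(πy), u_x(x,y,t) = −2ν · 2π E cos(2πx) sin(πy) / D, and u_y(x,y,t) = −2ν · π E sin(2πx) cos(πy) / D. Then D > 0 everywhere on ℝ² × (0,∞), and (u_x, u_y) satisfies the two-dimensional coupled Burgers' equations on ℝ² × (0,∞): ∂u_x/∂t + u_x ∂u_x/∂x + u_y ∂u_x/∂y = ν (∂²u_x/∂x² + ∂²u_x/∂y²) and ∂u_y/∂t + u_x ∂u_y/∂x + u_y ∂u_y/∂y = ν (∂²u_y/∂x² + ∂²u_y/∂y²). -/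

import Mathlib

open Real


-- basic blocks
lemma hdkx (k a : ℝ) : HasDerivAt (fun a : ℝ => k * a) k a := by
  simpa using (hasDerivAt_id a).const_mul k

lemma hdsinA (c0 c1 c2 k a : ℝ) :
    HasDerivAt (fun a => c0 * (c1 * Real.sin (k*a) * c2)) (c0 * (c1 * Real.cos (k*a) * c2) * k) a := by
  have h := (((hdkx k a).sin.const_mul c1).mul_const c2).const_mul c0
  refine h.congr_deriv ?_; ring

lemma hdcosA (c0 c1 c2 k a : ℝ) :
    HasDerivAt (fun a => c0 * (c1 * Real.cos (k*a) * c2)) (-(c0 * (c1 * Real.sin (k*a) * c2) * k)) a := by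
  have h := (((hdkx k a).cos.const_mul c1).mul_const c2).const_mul c0
  refine h.congr_deriv ?_; ring

lemma hdcosB (c1 c2 k a : ℝ) :
    HasDerivAt (fun a => c1 * Real.cos (k*a) * c2) (-(c1 * Real.sin (k*a) * c2 * k)) a := by
  have h := ((hdkx k a).cos.const_mul c1).mul_const c2
  refine h.congr_deriv ?_; ring

lemma hddenA (c1 c2 k a : ℝ) :
    HasDerivAt (fun a => 2 + c1 * Real.sin (k*a) * c2) (c1 * Real.cos (k*a) * c2 * k) a := by
  have h := (((hdkx k a).sin.const_mul c1).mul_const c2).const_add 2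
  refine h.congr_deriv ?_; ring

lemma hdsinC (c0 c1 k a : ℝ) :
    HasDerivAt (fun a => c0 * (c1 * Real.sin (k*a))) (c0 * (c1 * Real.cos (k*a)) * k) a := by
  have h := ((hdkx k a).sin.const_mul c1).const_mul c0
  refine h.congr_deriv ?_; ring

lemma hdcosC (c0 c1 k a : ℝ) :
    HasDerivAt (fun a => c0 * (c1 * Real.cos (k*a))) (-(c0 * (c1 * Real.sin (k*a)) * k)) a := by
  have h := ((hdkx k a).cos.const_mul c1).const_mul c0
  refine h.congr_deriv ?_; ring

lemma hdcosD (c1 k a : ℝ) :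
    HasDerivAt (fun a => c1 * Real.cos (k*a)) (-(c1 * Real.sin (k*a) * k)) a := by
  have h := (hdkx k a).cos.const_mul c1
  refine h.congr_deriv ?_; ring

lemma hddenC (c1 k a : ℝ) :
    HasDerivAt (fun a => 2 + c1 * Real.sin (k*a)) (c1 * Real.cos (k*a) * k) a := by
  have h := ((hdkx k a).sin.const_mul c1).const_add 2
  refine h.congr_deriv ?_; ring

lemma hdexpA (c0 c1 c2 c3 k τ : ℝ) :
    HasDerivAt (fun τ => c0 * (c1 * Real.exp (k*τ) * c2 * c3)) (c0 * (c1 * Real.exp (k*τ) * c2 * c3) * k) τ := by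
  have h := ((((hdkx k τ).exp.const_mul c1).mul_const c2).mul_const c3).const_mul c0
  refine h.congr_deriv ?_; ring

lemma hddenT (c2 c3 k τ : ℝ) :
    HasDerivAt (fun τ => 2 + Real.exp (k*τ) * c2 * c3) (Real.exp (k*τ) * c2 * c3 * k) τ := by
  have h := (((hdkx k τ).exp.mul_const c2).mul_const c3).const_add 2
  refine h.congr_deriv ?_; ring

lemma deriv_div_fun {N D : ℝ → ℝ} (N' D' : ℝ → ℝ)
    (hN : ∀ a, HasDerivAt N (N' a) a) (hD : ∀ a, HasDerivAt D (D' a) a)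
    (hD0 : ∀ a, D a ≠ 0) :
    deriv (fun a => N a / D a) = fun a => (N' a * D a - N a * D' a) / (D a)^2 :=
  funext fun a => ((hN a).div (hD a) (hD0 a)).deriv

/-- The Cole–Hopf velocity field
`u_x = −2ν·2π E cos(2πx) sin(πy)/D`, `u_y = −2ν·π E sin(2πx) cos(πy)/D`
with `E = exp(−5νπ²t)` and `D = 2 + E sin(2πx) sin(πy)` has positive denominator `D`
and solves the two-dimensional coupled Burgers' equations for `t > 0`. -/
theorem burgers_2d_analytical_solution
    (ν : ℝ) (hν : 0 < ν)
    (ux uy : ℝ → ℝ → ℝ → ℝ)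
    (hux : ∀ x y t : ℝ, ux x y t =
      -2 * ν * (2 * π * Real.exp (-5 * ν * π ^ 2 * t) * Real.cos (2 * π * x) * Real.sin (π * y)) /
        (2 + Real.exp (-5 * ν * π ^ 2 * t) * Real.sin (2 * π * x) * Real.sin (π * y)))
    (huy : ∀ x y t : ℝ, uy x y t =
      -2 * ν * (π * Real.exp (-5 * ν * π ^ 2 * t) * Real.sin (2 * π * x) * Real.cos (π * y)) /
        (2 + Real.exp (-5 * ν * π ^ 2 * t) * Real.sin (2 * π * x) * Real.sin (π * y))) :
    ∀ x y t : ℝ, 0 < t →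
      (0 < 2 + Real.exp (-5 * ν * π ^ 2 * t) * Real.sin (2 * π * x) * Real.sin (π * y)) ∧
      (deriv (fun τ => ux x y τ) t
          + ux x y t * deriv (fun a => ux a y t) x
          + uy x y t * deriv (fun b => ux x b t) y
        = ν * (deriv (deriv (fun a => ux a y t)) x + deriv (deriv (fun b => ux x b t)) y)) ∧
      (deriv (fun τ => uy x y τ) t
          + ux x y t * deriv (fun a => uy a y t) x
          + uy x y t * deriv (fun b => uy x b t) y
        = ν * (deriv (deriv (fun a => uy a y t)) x + deriv (deriv (fun b => uy x b t)) y)) := by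
  intro x y t ht
  have hπ := Real.pi_pos
  have hE0 : 0 < Real.exp (-5 * ν * π ^ 2 * t) := Real.exp_pos _
  have hDpos : ∀ u v : ℝ, 0 < 2 + Real.exp (-5 * ν * π ^ 2 * t) * Real.sin u * Real.sin v := by
    intro u v
    have hE1 : Real.exp (-5 * ν * π ^ 2 * t) < 1 := by
      have h5 : (0:ℝ) < 5 * ν * π ^ 2 * t := by positivity
      have h6 : -5 * ν * π ^ 2 * t < 0 := by linarith
      calc Real.exp (-5 * ν * π ^ 2 * t) < Real.exp 0 := Real.exp_lt_exp.2 h6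
        _ = 1 := Real.exp_zero
    have h1 : -1 ≤ Real.sin u * Real.sin v := by
      nlinarith [Real.neg_one_le_sin u, Real.sin_le_one u, Real.neg_one_le_sin v,
        Real.sin_le_one v]
    nlinarith [mul_le_mul_of_nonneg_left h1 hE0.le]
  have hD0 : (2 + Real.exp (-5 * ν * π ^ 2 * t) * Real.sin (2 * π * x) * Real.sin (π * y)) ≠ 0 := (hDpos (2 * π * x) (π * y)).ne'
  refine ⟨hDpos (2 * π * x) (π * y), ?_, ?_⟩
  · -- ux component
    have hT := ((hdexpA (-2 * ν) (2 * π) (Real.cos (2 * π * x)) (Real.sin (π * y)) (-5 * ν * π ^ 2) t).div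
      (hddenT (Real.sin (2 * π * x)) (Real.sin (π * y)) (-5 * ν * π ^ 2) t) hD0).deriv
    have hX := deriv_div_fun _ _
      (fun a => hdcosA (-2 * ν) (2 * π * Real.exp (-5 * ν * π ^ 2 * t)) (Real.sin (π * y)) (2 * π) a)
      (fun a => hddenA (Real.exp (-5 * ν * π ^ 2 * t)) (Real.sin (π * y)) (2 * π) a)
      (fun a => (hDpos (2 * π * a) (π * y)).ne')
    have hXX := (((((hdsinA (-2 * ν) (2 * π * Real.exp (-5 * ν * π ^ 2 * t)) (Real.sin (π * y)) (2 * π) x).mul_const (2 * π)).neg.mul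
        (hddenA (Real.exp (-5 * ν * π ^ 2 * t)) (Real.sin (π * y)) (2 * π) x)).sub
      ((hdcosA (-2 * ν) (2 * π * Real.exp (-5 * ν * π ^ 2 * t)) (Real.sin (π * y)) (2 * π) x).mul
        ((hdcosB (Real.exp (-5 * ν * π ^ 2 * t)) (Real.sin (π * y)) (2 * π) x).mul_const (2 * π)))).div
      ((hddenA (Real.exp (-5 * ν * π ^ 2 * t)) (Real.sin (π * y)) (2 * π) x).pow 2)
      (pow_ne_zero 2 hD0)).deriv
    have hY := deriv_div_fun _ _
      (fun b => hdsinC (-2 * ν) (2 * π * Real.exp (-5 * ν * π ^ 2 * t) * Real.cos (2 * π * x)) π b)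
      (fun b => hddenC (Real.exp (-5 * ν * π ^ 2 * t) * Real.sin (2 * π * x)) π b)
      (fun b => (hDpos (2 * π * x) (π * b)).ne')
    have hYY := ((((hdcosC (-2 * ν) (2 * π * Real.exp (-5 * ν * π ^ 2 * t) * Real.cos (2 * π * x)) π y).mul_const π).mul
        (hddenC (Real.exp (-5 * ν * π ^ 2 * t) * Real.sin (2 * π * x)) π y)).sub
      ((hdsinC (-2 * ν) (2 * π * Real.exp (-5 * ν * π ^ 2 * t) * Real.cos (2 * π * x)) π y).mul
        ((hdcosD (Real.exp (-5 * ν * π ^ 2 * t) * Real.sin (2 * π * x)) π y).mul_const π))).div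
      ((hddenC (Real.exp (-5 * ν * π ^ 2 * t) * Real.sin (2 * π * x)) π y).pow 2)
      (pow_ne_zero 2 hD0) |>.deriv
    simp only [hux, huy]
    simp only [hX, hY]
    simp only [Pi.div_def, Pi.mul_def, Pi.sub_def, Pi.neg_def, Pi.pow_def] at hT hXX hYY
    simp only [hT, hXX, hYY]
    revert hD0
    generalize Real.exp (-5 * ν * π ^ 2 * t) = e
    generalize Real.sin (2 * π * x) = S
    generalize Real.cos (2 * π * x) = C
    generalize Real.sin (π * y) = s
    generalize Real.cos (π * y) = c
    intro hD0
    norm_num only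
    field_simp
    ring
  · -- uy component
    have hT := ((hdexpA (-2 * ν) π (Real.sin (2 * π * x)) (Real.cos (π * y)) (-5 * ν * π ^ 2) t).div
      (hddenT (Real.sin (2 * π * x)) (Real.sin (π * y)) (-5 * ν * π ^ 2) t) hD0).deriv
    have hX := deriv_div_fun _ _
      (fun a => hdsinA (-2 * ν) (π * Real.exp (-5 * ν * π ^ 2 * t)) (Real.cos (π * y)) (2 * π) a)
      (fun a => hddenA (Real.exp (-5 * ν * π ^ 2 * t)) (Real.sin (π * y)) (2 * π) a)
      (fun a => (hDpos (2 * π * a) (π * y)).ne')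
    have hXX := ((((hdcosA (-2 * ν) (π * Real.exp (-5 * ν * π ^ 2 * t)) (Real.cos (π * y)) (2 * π) x).mul_const (2 * π)).mul
        (hddenA (Real.exp (-5 * ν * π ^ 2 * t)) (Real.sin (π * y)) (2 * π) x)).sub
      ((hdsinA (-2 * ν) (π * Real.exp (-5 * ν * π ^ 2 * t)) (Real.cos (π * y)) (2 * π) x).mul
        ((hdcosB (Real.exp (-5 * ν * π ^ 2 * t)) (Real.sin (π * y)) (2 * π) x).mul_const (2 * π)))).div
      ((hddenA (Real.exp (-5 * ν * π ^ 2 * t)) (Real.sin (π * y)) (2 * π) x).pow 2)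
      (pow_ne_zero 2 hD0) |>.deriv
    have hY := deriv_div_fun _ _
      (fun b => hdcosC (-2 * ν) (π * Real.exp (-5 * ν * π ^ 2 * t) * Real.sin (2 * π * x)) π b)
      (fun b => hddenC (Real.exp (-5 * ν * π ^ 2 * t) * Real.sin (2 * π * x)) π b)
      (fun b => (hDpos (2 * π * x) (π * b)).ne')
    have hYY := (((((hdsinC (-2 * ν) (π * Real.exp (-5 * ν * π ^ 2 * t) * Real.sin (2 * π * x)) π y).mul_const π).neg.mul
        (hddenC (Real.exp (-5 * ν * π ^ 2 * t) * Real.sin (2 * π * x)) π y)).sub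
      ((hdcosC (-2 * ν) (π * Real.exp (-5 * ν * π ^ 2 * t) * Real.sin (2 * π * x)) π y).mul
        ((hdcosD (Real.exp (-5 * ν * π ^ 2 * t) * Real.sin (2 * π * x)) π y).mul_const π))).div
      ((hddenC (Real.exp (-5 * ν * π ^ 2 * t) * Real.sin (2 * π * x)) π y).pow 2)
      (pow_ne_zero 2 hD0)).deriv
    simp only [hux, huy]
    simp only [hX, hY]
    simp only [Pi.div_def, Pi.mul_def, Pi.sub_def, Pi.neg_def, Pi.pow_def] at hT hXX hYY
    simp only [hT, hXX, hYY]
    revert hD0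
    generalize Real.exp (-5 * ν * π ^ 2 * t) = e
    generalize Real.sin (2 * π * x) = S
    generalize Real.cos (2 * π * x) = C
    generalize Real.sin (π * y) = s
    generalize Real.cos (π * y) = c
    intro hD0
    norm_num only
    field_simp
    ring
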